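/- The levels are well-ordered by membership: membership restricted to levels is a linear order, and every nonempty class of levels has an ∈-minimal element. -/
import Mathlib

def pot (a : ZFSet) : ZFSet :=
  ZFSet.sep (fun x => ∃ c ∈ a, x ⊆ c) (ZFSet.powerset (ZFSet.sUnion a))

def Potent (a : ZFSet) : Prop := ∀ x, (∃ c, x ⊆ c ∧ c ∈ a) → x ∈ a

def IsHistory (h : ZFSet) : Prop := ∀ x ∈ h, x = pot (x ∩ h)

def IsLevel (s : ZFSet) : Prop := ∃ h, IsHistory h ∧ s = pot h

open ZFSet

lemma mem_pot {a x : ZFSet} : x ∈ pot a ↔ ∃ c ∈ a, x ⊆ c := by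
  constructor
  · intro hx
    exact (ZFSet.mem_sep.1 hx).2
  · rintro ⟨c, hc, hxc⟩
    refine ZFSet.mem_sep.2 ⟨ZFSet.mem_powerset.2 fun y hy => ?_, c, hc, hxc⟩
    exact ZFSet.mem_sUnion.2 ⟨c, hc, hxc hy⟩

lemma pot_potent {a x c : ZFSet} (h1 : x ⊆ c) (h2 : c ∈ pot a) : x ∈ pot a := by
  obtain ⟨d, hd, hcd⟩ := mem_pot.1 h2
  exact mem_pot.2 ⟨d, hd, h1.trans hcd⟩

lemma level_potent {s x c : ZFSet} (hs : IsLevel s) (h1 : x ⊆ c) (h2 : c ∈ s) : x ∈ s := by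
  obtain ⟨h, hh, rfl⟩ := hs
  exact pot_potent h1 h2

lemma level_trans {s x y : ZFSet} (hs : IsLevel s) (hyx : y ∈ x) (hxs : x ∈ s) : y ∈ s := by
  obtain ⟨h, hh, rfl⟩ := hs
  obtain ⟨c, hc, hxc⟩ := mem_pot.1 hxs
  have hy : y ∈ pot (c ∩ h) := (hh c hc) ▸ hxc hyx
  obtain ⟨d, hd, hyd⟩ := mem_pot.1 hy
  exact mem_pot.2 ⟨d, (ZFSet.mem_inter.1 hd).2, hyd⟩

/-- Members of a history are ordered: if `d ∈ c` inside a history, then `d ⊆ c`. -/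
lemma hist_mem_subset : ∀ d : ZFSet, ∀ h c : ZFSet, IsHistory h → c ∈ h → d ∈ h → d ∈ c →
    d ⊆ c := by
  intro d
  induction d using ZFSet.inductionOn with
  | h d IH =>
    intro h c hh hc hd hdc e he
    have hdEq := hh d hd
    have hcEq := hh c hc
    -- d ⊆ d' for some d' ∈ c ∩ h
    have hd' : d ∈ pot (c ∩ h) := hcEq ▸ hdc
    obtain ⟨d', hd'ch, hdd'⟩ := mem_pot.1 hd'
    -- e ⊆ e' for some e' ∈ d ∩ h
    have he2 : e ∈ pot (d ∩ h) := hdEq ▸ he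
    obtain ⟨e', he'dh, hee'⟩ := mem_pot.1 he2
    have he'd : e' ∈ d := (ZFSet.mem_inter.1 he'dh).1
    have he'h : e' ∈ h := (ZFSet.mem_inter.1 he'dh).2
    have hd'c : d' ∈ c := (ZFSet.mem_inter.1 hd'ch).1
    have hd'h : d' ∈ h := (ZFSet.mem_inter.1 hd'ch).2
    -- e' ∈ d', so by IH e' ⊆ d'
    have he'd' : e' ∈ d' := hdd' he'd
    have hsub : e' ⊆ d' := IH e' he'd h d' hh hd'h he'h he'd'
    -- hence e' ∈ c
    have he'c : e' ∈ c := hcEq ▸ mem_pot.2 ⟨d', hd'ch, hsub⟩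
    -- hence e ∈ c
    exact hcEq ▸ mem_pot.2 ⟨e', ZFSet.mem_inter.2 ⟨he'c, he'h⟩, hee'⟩

/-- Members of a history are levels. -/
lemma hist_mem_level {h a : ZFSet} (hh : IsHistory h) (ha : a ∈ h) : IsLevel a := by
  refine ⟨a ∩ h, ?_, hh a ha⟩
  intro x hx
  have hxh : x ∈ h := (ZFSet.mem_inter.1 hx).2
  have hxa : x ∈ a := (ZFSet.mem_inter.1 hx).1
  have hx1 := hh x hxh
  have hsub : x ∩ h ⊆ a := by
    intro b hb
    have hbx : b ∈ x := (ZFSet.mem_inter.1 hb).1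
    have hbh : b ∈ h := (ZFSet.mem_inter.1 hb).2
    -- x ∈ a = pot (a ∩ h): x ⊆ c, c ∈ a ∩ h
    have : x ∈ pot (a ∩ h) := (hh a ha) ▸ hxa
    obtain ⟨c, hcah, hxc⟩ := mem_pot.1 this
    have hch : c ∈ h := (ZFSet.mem_inter.1 hcah).2
    have hbc : b ∈ c := hxc hbx
    have : b ⊆ c := hist_mem_subset b h c hh hch hbh hbc
    exact (hh a ha) ▸ mem_pot.2 ⟨c, hcah, this⟩
  have : x ∩ h = x ∩ (a ∩ h) := by
    apply ZFSet.ext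
    intro y
    simp only [ZFSet.mem_inter]
    constructor
    · intro ⟨h1, h2⟩
      exact ⟨h1, hsub (ZFSet.mem_inter.2 ⟨h1, h2⟩), h2⟩
    · rintro ⟨h1, _, h2⟩; exact ⟨h1, h2⟩
  rw [← this]; exact hx1

/-- The set of levels in a level. -/
noncomputable def lev (s : ZFSet) : ZFSet := ZFSet.sep IsLevel s

lemma mem_lev {s x : ZFSet} : x ∈ lev s ↔ x ∈ s ∧ IsLevel x := ZFSet.mem_sep

lemma level_eq_pot_lev {s : ZFSet} (hs : IsLevel s) : s = pot (lev s) := by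
  obtain ⟨h, hh, hse⟩ := hs
  have hsel : IsLevel s := ⟨h, hh, hse⟩
  have hsub : h ⊆ lev s := by
    intro c hc
    exact mem_lev.2 ⟨hse ▸ mem_pot.2 ⟨c, hc, fun y hy => hy⟩, hist_mem_level hh hc⟩
  apply ZFSet.ext; intro x
  constructor
  · intro hx
    obtain ⟨c, hc, hxc⟩ := mem_pot.1 (hse ▸ hx)
    exact mem_pot.2 ⟨c, hsub hc, hxc⟩
  · intro hx
    obtain ⟨r, hr, hxr⟩ := mem_pot.1 hx
    exact level_potent hsel hxr (mem_lev.1 hr).1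

lemma lev_history {s : ZFSet} (hs : IsLevel s) : IsHistory (lev s) := by
  intro r hr
  obtain ⟨hrs, hrl⟩ := mem_lev.1 hr
  have h1 : lev r = r ∩ lev s := by
    apply ZFSet.ext; intro q
    simp only [mem_lev, ZFSet.mem_inter]
    constructor
    · intro ⟨hq, hql⟩
      exact ⟨hq, level_trans hs hq hrs, hql⟩
    · rintro ⟨hq, _, hql⟩; exact ⟨hq, hql⟩
  rw [← h1]; exact level_eq_pot_lev hrl

/-- Comparability. -/
lemma level_comp : ∀ s : ZFSet, ∀ t : ZFSet, IsLevel s → IsLevel t → s ⊆ t ∨ t ∈ s := by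
  intro s
  induction s using ZFSet.inductionOn with
  | h s IH =>
    intro t hs ht
    by_cases hst : s ⊆ t
    · exact Or.inl hst
    · right
      obtain ⟨x, hxs, hxt⟩ : ∃ x, x ∈ s ∧ x ∉ t := by
        by_contra hcon
        push_neg at hcon
        exact hst fun y hy => hcon y hy
      obtain ⟨r, hr, hxr⟩ := mem_pot.1 (level_eq_pot_lev hs ▸ hxs)
      obtain ⟨hrs, hrl⟩ := mem_lev.1 hr
      have hrt : r ∉ t := fun hrt => hxt (level_potent ht hxr hrt)
      rcases IH r hrs t hrl ht with hsub | htr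
      · -- r ⊆ t; show t ⊆ r, so t = r ∈ s
        have htsubr : t ⊆ r := by
          intro y hy
          obtain ⟨q, hq, hyq⟩ := mem_pot.1 (level_eq_pot_lev ht ▸ hy)
          obtain ⟨hqt, hql⟩ := mem_lev.1 hq
          rcases IH r hrs q hrl hql with hrq | hqr
          · exact absurd (level_potent ht (hxr.trans hrq) hqt) hxt
          · exact level_potent hrl hyq hqr
        have : t = r := ZFSet.ext fun y => ⟨fun hy => htsubr hy, fun hy => hsub hy⟩
        exact this ▸ hrs
      · exact level_trans hs htr hrs

theorem stmt7 :
    (∀ r s t : ZFSet, IsLevel r → IsLevel s → IsLevel t → r ∈ s → s ∈ t → r ∈ t) ∧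
    (∀ s : ZFSet, IsLevel s → s ∉ s) ∧
    (∀ s t : ZFSet, IsLevel s → IsLevel t → (s ∈ t ∨ s = t ∨ t ∈ s)) ∧
    (∀ F : ZFSet → Prop, (∃ s, IsLevel s ∧ F s) →
      ∃ s, IsLevel s ∧ F s ∧ ∀ r, IsLevel r → F r → r ∉ s) := by
  refine ⟨?_, ?_, ?_, ?_⟩
  · intro r s t _ _ ht hrs hst
    exact level_trans ht hrs hst
  · intro s _
    exact ZFSet.mem_irrefl s
  · intro s t hs ht
    rcases level_comp s t hs ht with h1 | h1
    · rcases level_comp t s ht hs with h2 | h2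
      · exact Or.inr (Or.inl (ZFSet.ext fun y => ⟨fun hy => h1 hy, fun hy => h2 hy⟩))
      · exact Or.inl h2
    · exact Or.inr (Or.inr h1)
  · intro F ⟨s, hs, hFs⟩
    obtain ⟨a, ⟨hal, haF⟩, hmin⟩ :=
      ZFSet.mem_wf.has_min {x | IsLevel x ∧ F x} ⟨s, hs, hFs⟩
    exact ⟨a, hal, haF, fun r hrl hrF hra => hmin r ⟨hrl, hrF⟩ hra⟩
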